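/- Let n be a positive integer, let A and B be diagonal positive definite real n×n matrices, and let a, b ∈ ℝⁿ. For λ ∈ [0,1] define m_λ = (λA + (1−λ)B)⁻¹(λA a + (1−λ)B b). If for some λ̃ ∈ [0,1] the point m_{λ̃} lies outside the ellipsoid E(A, a), i.e., ‖m_{λ̃} − a‖_A > 1, then for every λ ∈ [0, λ̃] the point m_λ also lies outside E(A, a): ‖m_λ − a‖_A > 1. -/
import Mathlib


open Matrix

/-- The path point `m_λ = (λA + (1-λ)B)⁻¹ (λA a + (1-λ)B b)`. -/
noncomputable def mPath {n : ℕ} (A B : Matrix (Fin n) (Fin n) ℝ) (a b : Fin n → ℝ)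
    (lam : ℝ) : Fin n → ℝ :=
  (lam • A + (1 - lam) • B)⁻¹ *ᵥ (lam • (A *ᵥ a) + (1 - lam) • (B *ᵥ b))

/-- The norm `‖w‖_M = √(wᵀ M w)`. -/
noncomputable def matNorm {n : ℕ} (M : Matrix (Fin n) (Fin n) ℝ) (w : Fin n → ℝ) : ℝ :=
  Real.sqrt (w ⬝ᵥ (M *ᵥ w))

/-- The ellipsoid `E(M, m) = {x | ‖x - m‖_M ≤ 1}`. -/
noncomputable def ellipsoid {n : ℕ} (M : Matrix (Fin n) (Fin n) ℝ) (m : Fin n → ℝ) :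
    Set (Fin n → ℝ) :=
  {x | matNorm M (x - m) ≤ 1}

lemma denom_pos {dA dB lam : ℝ} (hdA : 0 < dA) (hdB : 0 < dB)
    (h0 : 0 ≤ lam) (h1 : lam ≤ 1) : 0 < lam * dA + (1 - lam) * dB := by
  rcases eq_or_lt_of_le h0 with h | h
  · rw [← h]; nlinarith
  · nlinarith [mul_pos h hdA, mul_nonneg (sub_nonneg.2 h1) hdB.le]

lemma mPath_comp {n : ℕ} (dA dB : Fin n → ℝ)
    (hdA : ∀ i, 0 < dA i) (hdB : ∀ i, 0 < dB i)
    (a b : Fin n → ℝ) (lam : ℝ) (h0 : 0 ≤ lam) (h1 : lam ≤ 1) (i : Fin n) :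
    (mPath (Matrix.diagonal dA) (Matrix.diagonal dB) a b lam - a) i
      = ((1 - lam) * dB i * (b i - a i)) / (lam * dA i + (1 - lam) * dB i) := by
  have hd : ∀ j, 0 < lam * dA j + (1 - lam) * dB j := fun j =>
    denom_pos (hdA j) (hdB j) h0 h1
  have hM : lam • (Matrix.diagonal dA) + (1 - lam) • (Matrix.diagonal dB)
      = Matrix.diagonal (fun j => lam * dA j + (1 - lam) * dB j) := by
    rw [← Matrix.diagonal_smul, ← Matrix.diagonal_smul, ← Matrix.diagonal_add]
    rfl
  have hinv : (Matrix.diagonal (fun j => lam * dA j + (1 - lam) * dB j))⁻¹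
      = Matrix.diagonal (fun j => (lam * dA j + (1 - lam) * dB j)⁻¹) := by
    apply Matrix.inv_eq_right_inv
    rw [Matrix.diagonal_mul_diagonal]
    ext j k
    by_cases h : j = k <;>
      simp [h, Matrix.one_apply, mul_inv_cancel₀ (hd k).ne']
  simp only [mPath, hM, hinv, Pi.sub_apply, Pi.add_apply, Pi.smul_apply,
    Matrix.mulVec_diagonal, smul_eq_mul]
  rw [eq_div_iff (hd i).ne']
  field_simp [(hd i).ne']
  ring

theorem mPath_stays_outside_A {n : ℕ} (hn : 0 < n)
    (A B : Matrix (Fin n) (Fin n) ℝ) (dA dB : Fin n → ℝ)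
    (hA : A = Matrix.diagonal dA) (hB : B = Matrix.diagonal dB)
    (hdA : ∀ i, 0 < dA i) (hdB : ∀ i, 0 < dB i)
    (a b : Fin n → ℝ)
    (ltil : ℝ) (h0 : 0 ≤ ltil) (h1 : ltil ≤ 1)
    (hout : 1 < matNorm A (mPath A B a b ltil - a)) :
    ∀ lam : ℝ, 0 ≤ lam → lam ≤ ltil → 1 < matNorm A (mPath A B a b lam - a) := by
  subst hA hB
  intro lam hl0 hl1
  have hl1' : lam ≤ 1 := hl1.trans h1
  have norm_eq : ∀ w : Fin n → ℝ, matNorm (Matrix.diagonal dA) w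
      = Real.sqrt (∑ i, dA i * (w i) ^ 2) := by
    intro w
    simp only [matNorm, dotProduct, Matrix.mulVec_diagonal]
    congr 1
    apply Finset.sum_congr rfl
    intro i _
    ring
  rw [norm_eq] at hout ⊢
  refine lt_of_lt_of_le hout (Real.sqrt_le_sqrt ?_)
  apply Finset.sum_le_sum
  intro i _
  have hdl : 0 < lam * dA i + (1 - lam) * dB i :=
    denom_pos (hdA i) (hdB i) hl0 hl1'
  have hdt : 0 < ltil * dA i + (1 - ltil) * dB i :=
    denom_pos (hdA i) (hdB i) h0 h1
  rw [mPath_comp dA dB hdA hdB a b ltil h0 h1 i,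
    mPath_comp dA dB hdA hdB a b lam hl0 hl1' i]
  rw [div_pow, div_pow]
  have hq : ((1 - ltil) * dB i * (b i - a i)) ^ 2 / (ltil * dA i + (1 - ltil) * dB i) ^ 2
      ≤ ((1 - lam) * dB i * (b i - a i)) ^ 2 / (lam * dA i + (1 - lam) * dB i) ^ 2 := by
    rw [div_le_div_iff₀ (by positivity) (by positivity)]
    have h5 : (1 - ltil) * dB i * (lam * dA i + (1 - lam) * dB i)
        ≤ (1 - lam) * dB i * (ltil * dA i + (1 - ltil) * dB i) := by
      nlinarith [mul_nonneg (mul_nonneg (hdA i).le (hdB i).le) (sub_nonneg.2 hl1),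
        sq_nonneg (dB i)]
    have hX : 0 ≤ (1 - ltil) * dB i * (lam * dA i + (1 - lam) * dB i) :=
      mul_nonneg (mul_nonneg (sub_nonneg.2 h1) (hdB i).le) hdl.le
    nlinarith [mul_le_mul_of_nonneg_left (mul_self_le_mul_self hX h5)
      (sq_nonneg (b i - a i))]
  exact mul_le_mul_of_nonneg_left hq (hdA i).le
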